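/- The set Z₁ has exactly q−3 elements and the set Z₂ has exactly q−1 elements. -/

import Mathlib

/-- `Q(α,β,γ,δ) = αδ - βγ`, the quadratic form of the hyperbolic quadric. -/
def Qf {F : Type*} [Field F] (v : Fin 4 → F) : F := v 0 * v 3 - v 1 * v 2

/-- `H(α,β,γ,δ) = α^{q+1} - β^{q+1} - γ^{q+1} + δ^{q+1}`, the Hermitian form. -/
def Hf (q : ℕ) {F : Type*} [Field F] (v : Fin 4 → F) : F :=
  v 0 ^ (q + 1) - v 1 ^ (q + 1) - v 2 ^ (q + 1) + v 3 ^ (q + 1)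

/-- `v = (α,β,γ,δ)` is nonsingular if `(αz + δ^q z^q)x + (γz + β^q z^q)x^q ≠ 0`
for all nonzero `x, z`. -/
def Nonsingular (q : ℕ) {F : Type*} [Field F] (v : Fin 4 → F) : Prop :=
  ∀ x z : F, x ≠ 0 → z ≠ 0 →
    (v 0 * z + v 3 ^ q * z ^ q) * x + (v 2 * z + v 1 ^ q * z ^ q) * x ^ q ≠ 0

/-- `Δ(v) = H(v)² - 4·Q(v)^{q+1}`. -/
def Deltaf (q : ℕ) {F : Type*} [Field F] (v : Fin 4 → F) : F :=
  Hf q v ^ 2 - 4 * Qf v ^ (q + 1)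

/-- A Σ-vector: a nonzero vector of the form `(α, β, β^q, α^q)`. -/
def IsSigmaVec (q : ℕ) {F : Type*} [Field F] (v : Fin 4 → F) : Prop :=
  v ≠ 0 ∧ ∃ α β : F, v = ![α, β, β ^ q, α ^ q]

/-- The sesquilinear form `h(u,v) = u₁v₁^q - u₂v₂^q - u₃v₃^q + u₄v₄^q`. -/
def hForm (q : ℕ) {F : Type*} [Field F] (u v : Fin 4 → F) : F :=
  u 0 * v 0 ^ q - u 1 * v 1 ^ q - u 2 * v 2 ^ q + u 3 * v 3 ^ q

/-- The one-dimensional `F`-subspace (as a set) spanned by `v`. -/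
def Fline {F : Type*} [Field F] (v : Fin 4 → F) : Set (Fin 4 → F) :=
  {x | ∃ a : F, x = a • v}

/-- The number of one-dimensional `𝔽_q`-subspaces `⟨(s,t)⟩` of `𝔽_q²` with
`Q(s·u + t·w) = 0`. -/
noncomputable def tangentCount (q : ℕ) {F : Type*} [Field F] (u w : Fin 4 → F) : ℕ :=
  Set.ncard {L : Set (F × F) | ∃ s t : F, s ^ q = s ∧ t ^ q = t ∧ (s, t) ≠ (0, 0) ∧
    Qf (fun i => s * u i + t * w i) = 0 ∧
    L = {p : F × F | ∃ e : F, e ^ q = e ∧ p = (e * s, e * t)}}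

/-- `Z₁`: the set of `ξ ∉ {0, 1, -1}` such that `1 - ξ⁻²` is a nonzero square of `𝔽_q`. -/
def Zone (q : ℕ) (F : Type*) [Field F] : Set F :=
  {ξ | ξ ≠ 0 ∧ ξ ≠ 1 ∧ ξ ≠ -1 ∧ ∃ s : F, s ^ q = s ∧ s ≠ 0 ∧ 1 - (ξ ^ 2)⁻¹ = s ^ 2}

/-- `Z₂`: the set of `ξ ≠ 0` such that `1 - ξ⁻²` is a nonzero nonsquare of `𝔽_q`. -/
def Ztwo (q : ℕ) (F : Type*) [Field F] : Set F :=
  {ξ | ξ ≠ 0 ∧ (1 - (ξ ^ 2)⁻¹) ^ q = 1 - (ξ ^ 2)⁻¹ ∧ 1 - (ξ ^ 2)⁻¹ ≠ 0 ∧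
    ¬∃ s : F, s ^ q = s ∧ 1 - (ξ ^ 2)⁻¹ = s ^ 2}

open Polynomial Finset in
/-- `|Z₁| = q - 3` and `|Z₂| = q - 1`. -/
theorem stmt11 (q : ℕ) (hq : ∃ p k : ℕ, p.Prime ∧ 0 < k ∧ q = p ^ k) (hodd : Odd q)
    (F : Type*) [Field F] [Fintype F] (hF : Fintype.card F = q ^ 2) :
    (Zone q F).ncard = q - 3 ∧ (Ztwo q F).ncard = q - 1 := by
  classical
  obtain ⟨p, k, hp, hk, hqpk⟩ := hq
  -- numerics
  have hp2 : p ≠ 2 := by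
    rintro rfl
    have heven : Even q := by rw [hqpk]; exact Nat.even_pow.mpr ⟨even_two, hk.ne'⟩
    exact (Nat.not_odd_iff_even.mpr heven) hodd
  have hp3 : 3 ≤ p := by have := hp.two_le; omega
  have hq3 : 3 ≤ q := le_trans hp3 (hqpk ▸ Nat.le_self_pow hk.ne' p)
  have hq1 : 1 < q := by omega
  have hq21 : 1 < q ^ 2 := by nlinarith
  -- characteristic
  haveI hcharF : CharP F p := by
    haveI h1 := ringChar.charP F
    have hprime : (ringChar F).Prime := CharP.char_is_prime F (ringChar F)
    obtain ⟨n, hpr, hn⟩ := FiniteField.card F (ringChar F)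
    have hdvd : p ∣ ringChar F ^ (n : ℕ) := by
      rw [← hn, hF, hqpk, ← pow_mul]
      exact dvd_pow_self p (by positivity)
    have : p = ringChar F := by
      have := hp.dvd_of_dvd_pow hdvd
      exact (Nat.prime_dvd_prime_iff_eq hp hpr).mp this
    rwa [this]
  haveI := Fact.mk hp
  have hrc : ringChar F = p := ringChar.eq F p
  have hring2 : ringChar F ≠ 2 := by rw [hrc]; exact hp2
  have h2 : (2 : F) ≠ 0 := by
    have : ((2 : ℕ) : F) ≠ 0 := by
      rw [Ne, CharP.cast_eq_zero_iff F p]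
      intro hdd; have := Nat.le_of_dvd (by norm_num) hdd; omega
    simpa using this
  -- the polynomial X^q - X
  set P : F[X] := X ^ q - X with hPdef
  have hPne : P ≠ 0 := FiniteField.X_pow_card_sub_X_ne_zero F hq1
  have hPdeg : P.natDegree = q := FiniteField.X_pow_card_sub_X_natDegree_eq F hq1
  have hQne : (X ^ (q ^ 2) - X : F[X]) ≠ 0 := FiniteField.X_pow_card_sub_X_ne_zero F hq21
  have hQdeg : (X ^ (q ^ 2) - X : F[X]).natDegree = q ^ 2 :=
    FiniteField.X_pow_card_sub_X_natDegree_eq F hq21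
  have hfrob : P ^ q = X ^ (q ^ 2) - X ^ q := by
    calc P ^ q = (X ^ q - X) ^ p ^ k := by rw [hPdef, hqpk]
      _ = (X ^ q) ^ p ^ k - X ^ p ^ k := sub_pow_char_pow _ _ _
      _ = X ^ (q ^ 2) - X ^ q := by rw [← hqpk, ← pow_mul, ← sq]
  have hdvd : P ∣ (X ^ (q ^ 2) - X : F[X]) := by
    refine ⟨P ^ (q - 1) + 1, ?_⟩
    have hq' : q - 1 + 1 = q := by omega
    calc X ^ (q ^ 2) - X = (X ^ (q ^ 2) - X ^ q) + (X ^ q - X) := by ring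
      _ = P ^ q + P := by rw [hfrob, hPdef]
      _ = P * (P ^ (q - 1) + 1) := by rw [mul_add, mul_one, ← pow_succ', hq']
  have hroots_univ : (X ^ (q ^ 2) - X : F[X]).roots = Finset.univ.val := by
    rw [← hF]; exact FiniteField.roots_X_pow_card_sub_X F
  have hProots_le : P.roots ≤ Finset.univ.val := by
    rw [← hroots_univ]; exact Polynomial.roots.le_of_dvd hQne hdvd
  have hProots_nodup : P.roots.Nodup := Multiset.nodup_of_le hProots_le Finset.univ.nodup
  have hProots_card : Multiset.card P.roots = q := by
    refine le_antisymm (hPdeg ▸ Polynomial.card_roots' P) ?_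
    obtain ⟨R, hR⟩ := hdvd
    have hRne : R ≠ 0 := by rintro rfl; rw [mul_zero] at hR; exact hQne hR
    have hmul : (X ^ (q ^ 2) - X : F[X]).roots = P.roots + R.roots := by
      rw [hR]; exact Polynomial.roots_mul (hR ▸ hQne)
    have hcard : Multiset.card ((X ^ (q ^ 2) - X : F[X]).roots) = q ^ 2 := by
      rw [hroots_univ]; simpa using hF
    have hRdeg : R.natDegree = q ^ 2 - q := by
      have := Polynomial.natDegree_mul hPne hRne
      rw [← hR, hQdeg, hPdeg] at this; omega
    have hRle : Multiset.card R.roots ≤ q ^ 2 - q := hRdeg ▸ Polynomial.card_roots' R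
    have : Multiset.card P.roots + Multiset.card R.roots = q ^ 2 := by
      rw [← Multiset.card_add, ← hmul, hcard]
    have hqq : q ≤ q ^ 2 := by nlinarith
    omega
  have hmemP : ∀ x : F, x ∈ P.roots ↔ x ^ q = x := by
    intro x
    rw [Polynomial.mem_roots hPne, hPdef]
    simp [Polynomial.IsRoot, sub_eq_zero]
  set KF : Finset F := P.roots.toFinset with hKF
  have hKFcard : KF.card = q := by
    rw [hKF, Multiset.toFinset_card_of_nodup hProots_nodup, hProots_card]
  have hKFmem : ∀ x, x ∈ KF ↔ x ^ q = x := fun x => by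
    rw [hKF, Multiset.mem_toFinset, hmemP]
  have hzeroK : (0 : F) ^ q = 0 := zero_pow (by omega)
  have hKstar : (Finset.univ.filter (fun s : F => s ^ q = s ∧ s ≠ 0)).card = q - 1 := by
    have he : Finset.univ.filter (fun s : F => s ^ q = s ∧ s ≠ 0) = KF.erase 0 := by
      ext s; simp [Finset.mem_erase, hKFmem, and_comm]
    rw [he, Finset.card_erase_of_mem ((hKFmem 0).mpr hzeroK), hKFcard]
  -- nonzero elements of K are squares in F
  have hKsq : ∀ t : F, t ^ q = t → t ≠ 0 → ∃ r : F, r ≠ 0 ∧ t = r ^ 2 := by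
    intro t ht ht0
    have ht1 : t ^ (q - 1) = 1 := by
      have hq' : q - 1 + 1 = q := by omega
      have h : t ^ (q - 1) * t = 1 * t := by rw [one_mul, ← pow_succ, hq', ht]
      exact mul_right_cancel₀ ht0 h
    have hsq : IsSquare t := by
      rw [FiniteField.isSquare_iff hring2 ht0, hF]
      obtain ⟨m, hm⟩ := hodd
      have hdiv : q ^ 2 / 2 = (q - 1) * ((q + 1) / 2) := by
        have e1 : q - 1 = 2 * m := by omega
        have e2 : (q + 1) / 2 = m + 1 := by omega
        rw [e1, e2]
        have h1 : q ^ 2 = 2 * (2 * (m * (m + 1))) + 1 := by rw [hm]; ring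
        have h2 : 2 * m * (m + 1) = 2 * (m * (m + 1)) := by ring
        rw [h2]
        omega
      calc t ^ (q ^ 2 / 2) = (t ^ (q - 1)) ^ ((q + 1) / 2) := by rw [← pow_mul, hdiv]
        _ = 1 := by rw [ht1, one_pow]
    obtain ⟨r, hr⟩ := hsq
    refine ⟨r, fun h => ht0 (by rw [hr, h, mul_zero]), by rw [hr, sq]⟩
  -- fibers of squaring have exactly two elements
  have hfiber : ∀ c r : F, r ≠ 0 → c = r ^ 2 →
      (Finset.univ.filter (fun ξ : F => ξ ^ 2 = c)).card = 2 := by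
    intro c r hr hc
    have he : Finset.univ.filter (fun ξ : F => ξ ^ 2 = c) = {r, -r} := by
      ext ξ
      simp only [Finset.mem_filter, Finset.mem_univ, true_and, Finset.mem_insert,
        Finset.mem_singleton, hc]
      constructor
      · intro h
        have h' : (ξ - r) * (ξ + r) = 0 := by linear_combination h
        rcases mul_eq_zero.mp h' with h'' | h''
        · exact Or.inl (sub_eq_zero.mp h'')
        · exact Or.inr (eq_neg_of_add_eq_zero_left h'')
      · rintro (rfl | rfl) <;> ring
    rw [he]
    rw [Finset.card_insert_of_notMem, Finset.card_singleton]
    simp only [Finset.mem_singleton]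
    intro h
    apply hr
    have h2r : (2 : F) * r = 0 := by linear_combination h
    rcases mul_eq_zero.mp h2r with h' | h'
    · exact absurd h' h2
    · exact h'
  -- main counting lemma
  have hcount : ∀ A : Finset F, (1 : F) ∉ A →
      (∀ t ∈ A, ∃ r : F, r ≠ 0 ∧ (1 - t)⁻¹ = r ^ 2) →
      (Finset.univ.filter (fun ξ : F => 1 - (ξ ^ 2)⁻¹ ∈ A)).card = 2 * A.card := by
    intro A h1A hA
    rw [Finset.card_eq_sum_card_fiberwise
      (f := fun ξ : F => 1 - (ξ ^ 2)⁻¹) (t := A)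
      (s := Finset.univ.filter (fun ξ : F => 1 - (ξ ^ 2)⁻¹ ∈ A))
      (fun x hx => (Finset.mem_filter.mp hx).2)]
    rw [Finset.sum_congr rfl (fun t ht => ?_), Finset.sum_const, smul_eq_mul, mul_comm]
    obtain ⟨r, hr, hrsq⟩ := hA t ht
    have he : (Finset.univ.filter (fun ξ : F => 1 - (ξ ^ 2)⁻¹ ∈ A)).filter
        (fun ξ : F => 1 - (ξ ^ 2)⁻¹ = t) = Finset.univ.filter (fun ξ : F => ξ ^ 2 = (1 - t)⁻¹) := by
      ext ξ
      simp only [Finset.filter_filter, Finset.mem_filter, Finset.mem_univ, true_and]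
      constructor
      · rintro ⟨-, hft⟩
        have hinv : (ξ ^ 2)⁻¹ = 1 - t := by linear_combination -hft
        rw [← hinv, inv_inv]
      · intro hξ
        have hft : 1 - (ξ ^ 2)⁻¹ = t := by
          rw [hξ, inv_inv]; ring
        exact ⟨hft ▸ ht, hft⟩
    rw [he, hfiber _ r hr hrsq]
  -- the set of nonzero squares of K
  set A1 : Finset F := Finset.univ.filter
    (fun t : F => ∃ s : F, s ^ q = s ∧ s ≠ 0 ∧ t = s ^ 2) with hA1
  have hA1card : q - 1 = 2 * A1.card := by
    rw [← hKstar]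
    have hmapsto : ∀ x ∈ Finset.univ.filter (fun s : F => s ^ q = s ∧ s ≠ 0),
        x ^ 2 ∈ A1 := by
      intro x hx
      simp only [Finset.mem_filter, Finset.mem_univ, true_and] at hx
      rw [hA1]
      simp only [Finset.mem_filter, Finset.mem_univ, true_and]
      exact ⟨x, hx.1, hx.2, rfl⟩
    rw [Finset.card_eq_sum_card_fiberwise (f := fun s : F => s ^ 2) (t := A1) hmapsto]
    rw [Finset.sum_congr rfl (fun t ht => ?_), Finset.sum_const, smul_eq_mul, mul_comm]
    simp only [hA1, Finset.mem_filter, Finset.mem_univ, true_and] at ht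
    obtain ⟨s₀, hs₀K, hs₀0, hts⟩ := ht
    have he : (Finset.univ.filter (fun s : F => s ^ q = s ∧ s ≠ 0)).filter
        (fun s : F => s ^ 2 = t) = Finset.univ.filter (fun s : F => s ^ 2 = t) := by
      ext s
      simp only [Finset.filter_filter, Finset.mem_filter, Finset.mem_univ, true_and]
      constructor
      · rintro ⟨-, h⟩; exact h
      · intro h
        have h' : (s - s₀) * (s + s₀) = 0 := by rw [hts] at h; linear_combination h
        have hs : s = s₀ ∨ s = -s₀ := by
          rcases mul_eq_zero.mp h' with h'' | h''
          · exact Or.inl (sub_eq_zero.mp h'')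
          · exact Or.inr (eq_neg_of_add_eq_zero_left h'')
        refine ⟨⟨?_, ?_⟩, h⟩
        · rcases hs with rfl | rfl
          · exact hs₀K
          · rw [hodd.neg_pow, hs₀K]
        · rcases hs with rfl | rfl
          · exact hs₀0
          · exact neg_ne_zero.mpr hs₀0
    rw [he, hfiber t s₀ hs₀0 hts]
  have h0A1 : (0 : F) ∉ A1 := by
    simp only [hA1, Finset.mem_filter, Finset.mem_univ, true_and]
    rintro ⟨s, -, hs0, hs⟩
    exact hs0 (pow_eq_zero_iff (n := 2) (by norm_num) |>.mp hs.symm)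
  have h1A1 : (1 : F) ∈ A1 := by
    simp only [hA1, Finset.mem_filter, Finset.mem_univ, true_and]
    exact ⟨1, one_pow q, one_ne_zero, (one_pow 2).symm⟩
  -- the set of nonsquares of K
  set A2 : Finset F := Finset.univ.filter
    (fun t : F => t ^ q = t ∧ ¬∃ s : F, s ^ q = s ∧ t = s ^ 2) with hA2
  have hA2card : A1.card + 1 + A2.card = q := by
    have hsplit := Finset.card_filter_add_card_filter_not
      (s := KF) (p := fun t : F => ∃ s : F, s ^ q = s ∧ t = s ^ 2)
    have e1 : KF.filter (fun t : F => ∃ s : F, s ^ q = s ∧ t = s ^ 2) = insert (0 : F) A1 := by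
      ext t
      simp only [Finset.mem_filter, hKFmem, Finset.mem_insert, hA1, Finset.mem_univ, true_and]
      constructor
      · rintro ⟨htK, s, hsK, hts⟩
        by_cases hs0 : s = 0
        · subst hs0; left; rw [hts]; ring
        · right; exact ⟨s, hsK, hs0, hts⟩
      · rintro (rfl | ⟨s, hsK, hs0, hts⟩)
        · exact ⟨hzeroK, 0, hzeroK, by ring⟩
        · refine ⟨?_, s, hsK, hts⟩
          rw [hts, ← pow_mul, mul_comm, pow_mul, hsK]
    have e2 : KF.filter (fun t : F => ¬∃ s : F, s ^ q = s ∧ t = s ^ 2) = A2 := by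
      ext t
      simp only [Finset.mem_filter, hKFmem, hA2, Finset.mem_univ, true_and]
    rw [e1, e2, Finset.card_insert_of_notMem h0A1, hKFcard] at hsplit
    omega
  -- hypotheses of the counting lemma
  have hinvsq : ∀ t : F, t ^ q = t → t ≠ 1 → ∃ r : F, r ≠ 0 ∧ (1 - t)⁻¹ = r ^ 2 := by
    intro t htK ht1
    have h1t : (1 : F) - t ≠ 0 := sub_ne_zero.mpr (Ne.symm ht1)
    have h1tK : ((1 : F) - t) ^ q = 1 - t := by
      calc ((1 : F) - t) ^ q = (1 - t) ^ p ^ k := by rw [hqpk]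
        _ = 1 ^ p ^ k - t ^ p ^ k := sub_pow_char_pow _ _ _
        _ = 1 - t := by rw [one_pow, ← hqpk, htK]
    have hinvK : (((1 : F) - t)⁻¹) ^ q = ((1 : F) - t)⁻¹ := by
      rw [inv_pow, h1tK]
    exact hKsq _ hinvK (inv_ne_zero h1t)
  -- Zone
  have hZ1 : Zone q F =
      ↑(Finset.univ.filter (fun ξ : F => 1 - (ξ ^ 2)⁻¹ ∈ A1.erase 1)) := by
    ext ξ
    simp only [Zone, Set.mem_setOf_eq, Finset.coe_filter, Finset.mem_erase, hA1,
      Finset.mem_filter, Finset.mem_univ, true_and, Set.mem_setOf_eq]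
    constructor
    · rintro ⟨h0, h1', hm1, s, hs, hs0, hts⟩
      refine ⟨?_, s, hs, hs0, hts⟩
      intro h
      have hx2 : (ξ ^ 2)⁻¹ = 0 := by linear_combination -h
      exact pow_ne_zero 2 h0 (inv_eq_zero.mp hx2)
    · rintro ⟨hne1, s, hs, hs0, hts⟩
      have hx0 : ξ ≠ 0 := by
        rintro rfl; apply hne1; norm_num
      have hxsq : ξ ^ 2 ≠ 1 := by
        intro h
        rw [h, inv_one] at hts
        have : s ^ 2 = 0 := by linear_combination -hts
        exact hs0 (pow_eq_zero_iff (n := 2) (by norm_num) |>.mp this)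
      refine ⟨hx0, ?_, ?_, s, hs, hs0, hts⟩
      · rintro rfl; exact hxsq (one_pow 2)
      · rintro rfl; exact hxsq (by ring)
    -- Ztwo
  have hZ2 : Ztwo q F =
      ↑(Finset.univ.filter (fun ξ : F => 1 - (ξ ^ 2)⁻¹ ∈ A2)) := by
    ext ξ
    simp only [Ztwo, Set.mem_setOf_eq, Finset.coe_filter, hA2,
      Finset.mem_filter, Finset.mem_univ, true_and, Set.mem_setOf_eq]
    constructor
    · rintro ⟨h0, hK, hne0, hns⟩
      exact ⟨hK, hns⟩
    · rintro ⟨hK, hns⟩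
      have hx0 : ξ ≠ 0 := by
        rintro rfl
        apply hns
        refine ⟨1, one_pow q, ?_⟩
        norm_num
      have hne0 : 1 - (ξ ^ 2)⁻¹ ≠ 0 := by
        intro h
        exact hns ⟨0, hzeroK, by rw [h]; ring⟩
      exact ⟨hx0, hK, hne0, hns⟩
  constructor
  · rw [hZ1, Set.ncard_coe_finset]
    rw [hcount (A1.erase 1) (Finset.notMem_erase 1 A1) ?_]
    · rw [Finset.card_erase_of_mem h1A1]
      omega
    · intro t ht
      rw [Finset.mem_erase] at ht
      obtain ⟨ht1, htm⟩ := ht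
      simp only [hA1, Finset.mem_filter, Finset.mem_univ, true_and] at htm
      obtain ⟨s, hsK, hs0, hts⟩ := htm
      have htK : t ^ q = t := by rw [hts, ← pow_mul, mul_comm, pow_mul, hsK]
      exact hinvsq t htK ht1
  · rw [hZ2, Set.ncard_coe_finset]
    rw [hcount A2 ?_ ?_]
    · omega
    · simp only [hA2, Finset.mem_filter, Finset.mem_univ, true_and]
      rintro ⟨-, hns⟩
      exact hns ⟨1, one_pow q, (one_pow 2).symm⟩
    · intro t ht
      simp only [hA2, Finset.mem_filter, Finset.mem_univ, true_and] at ht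
      obtain ⟨htK, hns⟩ := ht
      have ht1 : t ≠ 1 := by
        rintro rfl
        exact hns ⟨1, one_pow q, (one_pow 2).symm⟩
      exact hinvsq t htK ht1
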